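/- arXiv:1409.5381 — 2 statements merged into one kernel-verified Lean document; each statement's English description precedes it below -/
import Mathlib

section
/- Let E be a complex Banach space, e ∈ E a unit vector and z₀ ∈ Δ. Define f₀ : Δ → E by f₀(z) = ((1-|z₀|²)·z/(1 - conj(z₀)·z))·e. Then f₀ ∈ B₀(Δ,E), (1-|z₀|²)·‖f₀'(z₀)‖ = 1, and for every z ∈ Δ with z ≠ z₀ one has (1-|z|²)·‖f₀'(z)‖ < 1; in particular sup_{z∈Δ}(1-|z|²)‖f₀'(z)‖ = 1 and this supremum is attained only at z₀. -/
open Metric Complex Set Function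

noncomputable section

namespace BlochPaper

/-- The open unit disc `Δ = {z : |z| < 1}` in `ℂ`. -/
def disc : Set ℂ := Metric.ball 0 1

/-- A disc automorphism: on the disc, `σ` is given by a Möbius map
`z ↦ λ (z - a)/(1 - conj a · z)` with `|λ| = 1`, `|a| < 1`. -/
def IsDiscAut (σ : ℂ → ℂ) : Prop :=
  ∃ lam a : ℂ, ‖lam‖ = 1 ∧ ‖a‖ < 1 ∧
    ∀ z ∈ disc, σ z = lam * (z - a) / (1 - (starRingEnd ℂ) a * z)

/-- `g(z) → 0` as `|z| → 1` within the disc. -/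
def ZeroAtBoundary (g : ℂ → ℝ) : Prop :=
  ∀ ε > 0, ∃ r : ℝ, r < 1 ∧ ∀ z ∈ disc, r < ‖z‖ → g z < ε

/-- A complex Banach space is smooth if every norm-one vector has
a unique norming functional. -/
def Smooth (E : Type*) [NormedAddCommGroup E] [NormedSpace ℂ E] : Prop :=
  ∀ x : E, ‖x‖ = 1 → ∃! φ : E →L[ℂ] ℂ, ‖φ‖ = 1 ∧ φ x = 1

/-- A complex Banach space is strictly convex if `‖x + y‖ < 2` for distinct
norm-one vectors `x, y`. -/
def StrictlyConvexSp (E : Type*) [NormedAddCommGroup E] : Prop :=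
  ∀ x y : E, x ≠ y → ‖x‖ = 1 → ‖y‖ = 1 → ‖x + y‖ < 2

lemma normSq_key (a z : ℂ) :
    ‖1 - (starRingEnd ℂ) a * z‖ ^ 2 =
      (1 - ‖z‖ ^ 2) * (1 - ‖a‖ ^ 2) + ‖z - a‖ ^ 2 := by
  have h : ∀ w : ℂ, ‖w‖ ^ 2 = Complex.normSq w := fun w => by
    rw [Complex.sq_norm]
  simp only [h, Complex.normSq_apply, Complex.sub_re, Complex.sub_im, Complex.mul_re,
    Complex.mul_im, Complex.one_re, Complex.one_im, Complex.conj_re, Complex.conj_im]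
  ring

/-- **Statement 17.** The test function `f₀(z) = ((1-|z₀|²)z/(1-conj z₀ · z))·e`
belongs to `B₀(Δ,E)`, satisfies `(1-|z₀|²)‖f₀'(z₀)‖ = 1` and
`(1-|z|²)‖f₀'(z)‖ < 1` for `z ≠ z₀`; in particular the Bloch supremum is `1`
and is attained only at `z₀`. -/
theorem test_function_peaks (E : Type*) [NormedAddCommGroup E] [NormedSpace ℂ E]
    (e : E) (he : ‖e‖ = 1) (z₀ : ℂ) (hz₀ : z₀ ∈ disc) (f₀ : ℂ → E)
    (hf₀ : ∀ z, f₀ z = ((((1 : ℝ) - ‖z₀‖ ^ 2 : ℝ) : ℂ) * z / (1 - (starRingEnd ℂ) z₀ * z)) • e) :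
    DifferentiableOn ℂ f₀ disc ∧ f₀ 0 = 0 ∧
      ZeroAtBoundary (fun z => (1 - ‖z‖ ^ 2) * ‖deriv f₀ z‖) ∧
      (1 - ‖z₀‖ ^ 2) * ‖deriv f₀ z₀‖ = 1 ∧
      (∀ z ∈ disc, z ≠ z₀ → (1 - ‖z‖ ^ 2) * ‖deriv f₀ z‖ < 1) ∧
      IsGreatest {x : ℝ | ∃ z ∈ disc, x = (1 - ‖z‖ ^ 2) * ‖deriv f₀ z‖} 1 := by
  have hz0 : ‖z₀‖ < 1 := by simpa [disc] using hz₀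
  set c : ℂ := (starRingEnd ℂ) z₀ with hc
  set K : ℂ := (((1 : ℝ) - ‖z₀‖ ^ 2 : ℝ) : ℂ) with hK
  have hz0nn : (0:ℝ) ≤ ‖z₀‖ := norm_nonneg _
  have hKpos : (0:ℝ) < 1 - ‖z₀‖ ^ 2 := by nlinarith
  have hcn : ‖c‖ = ‖z₀‖ := by rw [hc]; exact RCLike.norm_conj z₀
  have hcz : ∀ z ∈ disc, (1 : ℂ) - c * z ≠ 0 := by
    intro z hz h
    have hz1 : ‖z‖ < 1 := by simpa [disc] using hz
    have h2 : c * z = 1 := by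
      have := sub_eq_zero.mp h; exact this.symm
    have h3 : ‖c * z‖ < 1 := by
      rw [norm_mul, hcn]
      nlinarith [norm_nonneg z]
    rw [h2] at h3; simp at h3
  have hderiv : ∀ z ∈ disc, HasDerivAt f₀ ((K / (1 - c * z) ^ 2) • e) z := by
    intro z hz
    have h1 : HasDerivAt (fun w : ℂ => K * w) K z := by
      simpa using (hasDerivAt_id z).const_mul K
    have h2 : HasDerivAt (fun w : ℂ => 1 - c * w) (-c) z := by
      simpa using ((hasDerivAt_id z).const_mul c).const_sub (1 : ℂ)
    have h3 := (h1.div h2 (hcz z hz)).smul_const e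
    have hfun : f₀ = fun w : ℂ => (K * w / (1 - c * w)) • e := funext hf₀
    rw [hfun]
    have heq : (K * (1 - c * z) - K * z * -c) / (1 - c * z) ^ 2 = K / (1 - c * z) ^ 2 := by
      congr 1; ring
    rw [← heq]
    exact h3
  have hnorm : ∀ z ∈ disc, ‖deriv f₀ z‖ = (1 - ‖z₀‖ ^ 2) / ‖1 - c * z‖ ^ 2 := by
    intro z hz
    rw [(hderiv z hz).deriv, norm_smul, he, mul_one, norm_div, norm_pow, hK,
      Complex.norm_real, Real.norm_eq_abs, abs_of_pos hKpos]
  have hval : ∀ z ∈ disc, (1 - ‖z‖ ^ 2) * ‖deriv f₀ z‖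
      = (1 - ‖z‖ ^ 2) * (1 - ‖z₀‖ ^ 2)
        / ((1 - ‖z‖ ^ 2) * (1 - ‖z₀‖ ^ 2) + ‖z - z₀‖ ^ 2) := by
    intro z hz
    rw [hnorm z hz, hc, normSq_key]
    ring
  have hApos : ∀ z ∈ disc, (0:ℝ) < (1 - ‖z‖ ^ 2) * (1 - ‖z₀‖ ^ 2) := by
    intro z hz
    have hz1 : ‖z‖ < 1 := by simpa [disc] using hz
    have : (0:ℝ) < 1 - ‖z‖ ^ 2 := by nlinarith [norm_nonneg z]
    exact mul_pos this hKpos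
  have hle1 : ∀ z ∈ disc, (1 - ‖z‖ ^ 2) * ‖deriv f₀ z‖ ≤ 1 := by
    intro z hz
    rw [hval z hz]
    apply div_le_one_of_le₀
    · nlinarith [sq_nonneg ‖z - z₀‖]
    · nlinarith [hApos z hz, sq_nonneg ‖z - z₀‖]
  have hat : (1 - ‖z₀‖ ^ 2) * ‖deriv f₀ z₀‖ = 1 := by
    rw [hval z₀ hz₀]
    simp only [sub_self, norm_zero]
    rw [zero_pow (by norm_num), add_zero, div_self (ne_of_gt (hApos z₀ hz₀))]
  refine ⟨?_, ?_, ?_, hat, ?_, ?_⟩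
  · exact fun z hz => ((hderiv z hz).differentiableAt).differentiableWithinAt
  · simp [hf₀]
  · intro ε hε
    set M : ℝ := 2 * (1 - ‖z₀‖ ^ 2) / (1 - ‖z₀‖) ^ 2 with hM
    have h01 : (0:ℝ) < 1 - ‖z₀‖ := by linarith
    have hMpos : 0 < M := by positivity
    refine ⟨1 - ε / M, by nlinarith [div_pos hε hMpos], ?_⟩
    intro z hz hr
    have hz1 : ‖z‖ < 1 := by simpa [disc] using hz
    have hznn : (0:ℝ) ≤ ‖z‖ := norm_nonneg z
    have hden : 1 - ‖z₀‖ ≤ ‖1 - c * z‖ := by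
      have h1 : ‖c * z‖ ≤ ‖z₀‖ := by
        rw [norm_mul, hcn]; nlinarith
      have h2 := norm_sub_norm_le (1:ℂ) (c * z)
      simp only [norm_one] at h2
      linarith
    have hdensq : (1 - ‖z₀‖) ^ 2 ≤ ‖1 - c * z‖ ^ 2 := by nlinarith
    simp only
    rw [hnorm z hz]
    have hstep : (1 - ‖z‖ ^ 2) * ((1 - ‖z₀‖ ^ 2) / ‖1 - c * z‖ ^ 2)
        ≤ (1 - ‖z‖ ^ 2) * (1 - ‖z₀‖ ^ 2) / (1 - ‖z₀‖) ^ 2 := by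
      rw [mul_div_assoc]
      gcongr
      nlinarith
    have hεM : (1 - ‖z‖) * M < ε := (lt_div_iff₀ hMpos).mp (by linarith)
    have hMexp : M * (1 - ‖z₀‖) ^ 2 = 2 * (1 - ‖z₀‖ ^ 2) := by
      rw [hM, div_mul_cancel₀ _ (ne_of_gt (by positivity : (0:ℝ) < (1 - ‖z₀‖) ^ 2))]
    have key : (1 - ‖z‖) * M * (1 - ‖z₀‖) ^ 2 < ε * (1 - ‖z₀‖) ^ 2 :=
      mul_lt_mul_of_pos_right hεM (by positivity)
    have key2 : (1 - ‖z‖) * (2 * (1 - ‖z₀‖ ^ 2)) < ε * (1 - ‖z₀‖) ^ 2 := by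
      calc (1 - ‖z‖) * (2 * (1 - ‖z₀‖ ^ 2)) = (1 - ‖z‖) * M * (1 - ‖z₀‖) ^ 2 := by
            rw [mul_assoc, hMexp]
        _ < ε * (1 - ‖z₀‖) ^ 2 := key
    calc (1 - ‖z‖ ^ 2) * ((1 - ‖z₀‖ ^ 2) / ‖1 - c * z‖ ^ 2)
        ≤ (1 - ‖z‖ ^ 2) * (1 - ‖z₀‖ ^ 2) / (1 - ‖z₀‖) ^ 2 := hstep
      _ < ε := by
          rw [div_lt_iff₀ (by positivity)]
          nlinarith [key2, mul_nonneg hKpos.le (sq_nonneg (1 - ‖z‖))]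
  · intro z hz hne
    rw [hval z hz]
    rw [div_lt_one (by nlinarith [hApos z hz, sq_nonneg ‖z - z₀‖])]
    have : 0 < ‖z - z₀‖ ^ 2 :=
      pow_pos (norm_pos_iff.mpr (sub_ne_zero.mpr hne)) 2
    linarith
  · constructor
    · exact ⟨z₀, hz₀, hat.symm⟩
    · rintro x ⟨z, hz, rfl⟩
      exact hle1 z hz


end BlochPaper
end
end

section
/- Let a : ℝ → ℂ and b : ℝ → ℂ be functions differentiable at 0 with |a(t)| = 1 and |b(t)| < 1 for all t, a(0) = 1 and b(0) = 0, and define φ_t(z) = a(t)·(z - b(t))/(1 - conj(b(t))·z) for z ∈ Δ. Then for every z ∈ Δ, the derivative of t ↦ φ_t(z) at t = 0 equals P(z) = conj(b'(0))·z² + a'(0)·z - b'(0), and the derivative of t ↦ φ_t'(z) (the z-derivative of φ_t) at t = 0 equals P'(z) = 2·conj(b'(0))·z + a'(0). -/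
open Metric Complex Set Function

noncomputable section

namespace BlochPaper

/-- **Statement 18.** For a one-parameter family of Möbius maps
`φ_t(z) = a(t)(z-b(t))/(1-conj(b(t))z)` with `a, b` differentiable at `0`,
`a(0) = 1`, `b(0) = 0`, the `t`-derivative at `0` of `φ_t(z)` is the invariant
polynomial `P(z) = conj(b'(0))z² + a'(0)z - b'(0)`, and that of `φ_t'(z)` is `P'(z)`. -/
theorem invariant_polynomial (a b : ℝ → ℂ) (a' b' : ℂ)
    (ha : HasDerivAt a a' 0) (hb : HasDerivAt b b' 0)
    (hanorm : ∀ t, ‖a t‖ = 1) (hbnorm : ∀ t, ‖b t‖ < 1)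
    (ha0 : a 0 = 1) (hb0 : b 0 = 0) (φ : ℝ → ℂ → ℂ)
    (hφ : ∀ t z, φ t z = a t * (z - b t) / (1 - (starRingEnd ℂ) (b t) * z)) :
    ∀ z ∈ disc,
      HasDerivAt (fun t : ℝ => φ t z) ((starRingEnd ℂ) b' * z ^ 2 + a' * z - b') 0 ∧
      HasDerivAt (fun t : ℝ => deriv (φ t) z) (2 * (starRingEnd ℂ) b' * z + a') 0 := by
  intro z hz
  have hz1 : ‖z‖ < 1 := by simpa [disc] using hz
  have hden : ∀ t, (1 : ℂ) - (starRingEnd ℂ) (b t) * z ≠ 0 := by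
    intro t h
    have h1 : (starRingEnd ℂ) (b t) * z = 1 := by linear_combination -h
    have : ‖(starRingEnd ℂ) (b t) * z‖ < 1 := by
      rw [norm_mul, RingHomIsometric.norm_map]
      calc ‖b t‖ * ‖z‖ ≤ 1 * ‖z‖ := by
            exact mul_le_mul_of_nonneg_right (hbnorm t).le (norm_nonneg z)
        _ < 1 := by simpa using hz1
    rw [h1, norm_one] at this; exact lt_irrefl 1 this
  have hbstar : HasDerivAt (fun t => (starRingEnd ℂ) (b t)) ((starRingEnd ℂ) b') 0 := by
    simp only [starRingEnd_apply]; exact hb.star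
  -- first derivative
  have hN : HasDerivAt (fun t => a t * (z - b t)) (a' * z - b') 0 := by
    have := ha.mul ((hasDerivAt_const (0 : ℝ) z).sub hb)
    refine this.congr_deriv ?_
    simp [ha0, hb0]; ring
  have hD : HasDerivAt (fun t => (1 : ℂ) - (starRingEnd ℂ) (b t) * z)
      (-((starRingEnd ℂ) b' * z)) 0 := (hbstar.mul_const z).const_sub 1
  have hD0 : (1 : ℂ) - (starRingEnd ℂ) (b 0) * z ≠ 0 := hden 0
  have first : HasDerivAt (fun t : ℝ => φ t z)
      ((starRingEnd ℂ) b' * z ^ 2 + a' * z - b') 0 := by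
    have := hN.div hD hD0
    have heq : (fun t : ℝ => φ t z)
        = fun t => a t * (z - b t) / (1 - (starRingEnd ℂ) (b t) * z) :=
      funext fun t => hφ t z
    rw [heq]
    refine this.congr_deriv ?_
    simp [ha0, hb0]; ring
  refine ⟨first, ?_⟩
  -- z-derivative formula for each t
  have key : ∀ t, HasDerivAt (φ t)
      (a t * (1 - (starRingEnd ℂ) (b t) * b t) / (1 - (starRingEnd ℂ) (b t) * z) ^ 2) z := by
    intro t
    have heq : φ t = fun w => a t * (w - b t) / (1 - (starRingEnd ℂ) (b t) * w) :=
      funext fun w => hφ t w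
    rw [heq]
    have hNz : HasDerivAt (fun w : ℂ => a t * (w - b t)) (a t) z := by
      simpa using ((hasDerivAt_id z).sub_const (b t)).const_mul (a t)
    have hDz : HasDerivAt (fun w : ℂ => (1 : ℂ) - (starRingEnd ℂ) (b t) * w)
        (-(starRingEnd ℂ) (b t)) z := by
      simpa using ((hasDerivAt_id z).const_mul ((starRingEnd ℂ) (b t))).const_sub 1
    have := hNz.div hDz (hden t)
    refine this.congr_deriv ?_
    field_simp
    ring
  have heq2 : (fun t : ℝ => deriv (φ t) z)
      = fun t => a t * (1 - (starRingEnd ℂ) (b t) * b t)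
          / (1 - (starRingEnd ℂ) (b t) * z) ^ 2 :=
    funext fun t => (key t).deriv
  rw [heq2]
  have hN2 : HasDerivAt (fun t => a t * (1 - (starRingEnd ℂ) (b t) * b t)) a' 0 := by
    have := ha.mul ((hbstar.mul hb).const_sub 1)
    refine this.congr_deriv ?_
    simp [ha0, hb0]
  have hD2 : HasDerivAt (fun t => ((1 : ℂ) - (starRingEnd ℂ) (b t) * z) ^ 2)
      (-(2 * (starRingEnd ℂ) b' * z)) 0 := by
    have := hD.mul hD
    have heq3 : (fun t => ((1 : ℂ) - (starRingEnd ℂ) (b t) * z) ^ 2)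
        = fun t => ((1 : ℂ) - (starRingEnd ℂ) (b t) * z)
          * ((1 : ℂ) - (starRingEnd ℂ) (b t) * z) := funext fun t => sq _
    rw [heq3]
    refine this.congr_deriv ?_
    simp [hb0]; ring
  have hD20 : ((1 : ℂ) - (starRingEnd ℂ) (b 0) * z) ^ 2 ≠ 0 := pow_ne_zero 2 hD0
  have := hN2.div hD2 hD20
  refine this.congr_deriv ?_
  simp [ha0, hb0]; ring

end BlochPaper
end
end
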